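/- Let P and Q be compact convex bodies in R^n with P contained in R^m x {0}, and let pi: R^n -> R^{n-m} be the projection onto the last n-m coordinates. Then the coefficient of lambda^m in the polynomial lambda |-> vol(lambda P + Q) equals vol_m(P) times vol_{n-m}(pi(Q)), where vol_m(P) is the m-dimensional Lebesgue volume of P inside R^m x {0}. -/

import Mathlib

open Pointwise MeasureTheory

/-- The inclusion `ℝ^m → ℝ^n = ℝ^m × {0}` by extending with zeros. -/
def incl (m n : ℕ) (x : Fin m → ℝ) : Fin n → ℝ :=
  fun j => if h : (j : ℕ) < m then x ⟨j, h⟩ else 0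

/-- The projection `ℝ^n → ℝ^{n-m}` onto the last `n - m` coordinates. -/
def projLast (m n : ℕ) (hm : m ≤ n) (x : Fin n → ℝ) : Fin (n - m) → ℝ :=
  fun i => x ⟨m + i, by omega⟩

open Filter Topology Metric Set Asymptotics

/-- If `p(x)/x^m` tends to `c` at infinity, then the `m`-th coefficient of `p` is `c`. -/
lemma coeff_eq_of_tendsto (p : Polynomial ℝ) (m : ℕ) (c : ℝ)
    (h : Tendsto (fun x => p.eval x / x ^ m) atTop (𝓝 c)) :
    p.coeff m = c := by
  set q := p - Polynomial.C c * Polynomial.X ^ m with hqdef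
  have hcoeff : q.coeff m = p.coeff m - c := by
    simp [hqdef, Polynomial.coeff_X_pow]
  have hq0 : Tendsto (fun x => q.eval x / x ^ m) atTop (𝓝 0) := by
    have heq : (fun x => q.eval x / x ^ m) =ᶠ[atTop] fun x => p.eval x / x ^ m - c := by
      filter_upwards [eventually_gt_atTop (0 : ℝ)] with x hx
      have hxm : x ^ m ≠ 0 := pow_ne_zero _ hx.ne'
      simp only [hqdef, Polynomial.eval_sub, Polynomial.eval_mul, Polynomial.eval_C,
        Polynomial.eval_pow, Polynomial.eval_X, sub_div]
      rw [mul_div_assoc, div_self hxm, mul_one]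
    rw [tendsto_congr' heq]
    simpa using h.sub (tendsto_const_nhds (x := c))
  have hqc : q.coeff m = 0 := by
    by_contra hne
    have hqne : q ≠ 0 := fun h0 => hne (by rw [h0]; simp)
    have hmd : m ≤ q.natDegree := Polynomial.le_natDegree_of_ne_zero hne
    have hL : q.leadingCoeff ≠ 0 := Polynomial.leadingCoeff_ne_zero.mpr hqne
    have hlead := Polynomial.isEquivalent_atTop_lead q
    have h2 : Tendsto (fun x => q.leadingCoeff * x ^ q.natDegree / x ^ m) atTop (𝓝 0) :=
      (hlead.div (Asymptotics.IsEquivalent.refl)).tendsto_nhds hq0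
    have h3 : Tendsto (fun x => q.leadingCoeff * x ^ (q.natDegree - m)) atTop (𝓝 0) := by
      refine h2.congr' ?_
      filter_upwards [eventually_gt_atTop (0 : ℝ)] with x hx
      rw [mul_div_assoc, div_eq_mul_inv, ← pow_sub₀ x hx.ne' hmd]
    rcases eq_or_lt_of_le hmd with hdm | hdm
    · have hconst : Tendsto (fun _ : ℝ => q.leadingCoeff) atTop (𝓝 0) := by
        simpa [← hdm] using h3
      exact hL (tendsto_nhds_unique tendsto_const_nhds hconst)
    · have hpow : Tendsto (fun x : ℝ => x ^ (q.natDegree - m)) atTop atTop :=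
        tendsto_pow_atTop (by omega)
      have habs : Tendsto (fun x : ℝ => |q.leadingCoeff| * x ^ (q.natDegree - m)) atTop atTop :=
        hpow.const_mul_atTop (abs_pos.mpr hL)
      have habs' : Tendsto (fun x : ℝ => |q.leadingCoeff| * x ^ (q.natDegree - m)) atTop (𝓝 0) := by
        have := h3.abs
        simp only [abs_zero] at this
        refine this.congr' ?_
        filter_upwards [eventually_ge_atTop (0 : ℝ)] with x hx
        rw [abs_mul, abs_of_nonneg (pow_nonneg hx _)]
      exact not_tendsto_nhds_of_tendsto_atTop habs 0 habs'
  rw [hcoeff] at hqc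
  linarith

/-- Let `P, Q ⊆ ℝ^n` be compact convex bodies with `P ⊆ ℝ^m × {0}`.
If `p` is a polynomial with `p(λ) = vol(λP + Q)` for all `λ ≥ 0`, then the coefficient
of `λ^m` in `p` equals `vol_m(P) * vol_{n-m}(π(Q))`, where `π : ℝ^n → ℝ^{n-m}` is the
projection onto the last `n - m` coordinates and `vol_m(P)` is the `m`-dimensional
Lebesgue volume of `P` inside `ℝ^m × {0}`. -/
theorem coeff_volume_minkowski {n m : ℕ} (hm : m ≤ n)
    (P Q : Set (Fin n → ℝ)) (hPc : IsCompact P) (hPcv : Convex ℝ P) (hPne : P.Nonempty)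
    (hQc : IsCompact Q) (hQcv : Convex ℝ Q) (hQne : Q.Nonempty)
    (hP : ∀ x ∈ P, ∀ j : Fin n, m ≤ (j : ℕ) → x j = 0)
    (p : Polynomial ℝ)
    (hp : ∀ lam : ℝ, 0 ≤ lam → p.eval lam = (volume (lam • P + Q)).toReal) :
    p.coeff m = (volume (incl m n ⁻¹' P)).toReal *
      (volume (projLast m n hm '' Q)).toReal := by
  set k := n - m with hkdef
  have hk : m + k = n := by omega
  -- the gluing map ℝ^m × ℝ^k → ℝ^n
  set σ : Fin m ⊕ Fin k ≃ Fin n := finSumFinEquiv.trans (finCongr hk) with hσ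
  set g : (Fin m → ℝ) × (Fin k → ℝ) → (Fin n → ℝ) :=
    fun yz => fun j => if h : (j : ℕ) < m then yz.1 ⟨j, h⟩
      else yz.2 ⟨(j : ℕ) - m, by have := j.isLt; omega⟩ with hgdef
  -- g is measure preserving
  have hg_eq : (⇑(MeasurableEquiv.piCongrLeft (fun _ : Fin n => ℝ) σ) ∘
      ⇑(MeasurableEquiv.sumPiEquivProdPi (fun _ : Fin m ⊕ Fin k => ℝ)).symm) = g := by
    funext yz
    funext j
    simp only [Function.comp_apply, MeasurableEquiv.coe_piCongrLeft,
      MeasurableEquiv.coe_sumPiEquivProdPi_symm]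
    by_cases hj : (j : ℕ) < m
    · have hj' : j = σ (Sum.inl ⟨(j : ℕ), hj⟩) := by
        apply Fin.ext
        simp [hσ]
      conv_lhs => rw [hj']
      rw [Equiv.piCongrLeft_apply_apply]
      simp [hgdef, hj]
    · have hjm : (j : ℕ) - m < k := by have := j.isLt; omega
      have hj' : j = σ (Sum.inr ⟨(j : ℕ) - m, hjm⟩) := by
        apply Fin.ext
        simp [hσ]
        omega
      conv_lhs => rw [hj']
      rw [Equiv.piCongrLeft_apply_apply]
      simp [hgdef, hj]
  have hg : MeasurePreserving g (volume : Measure ((Fin m → ℝ) × (Fin k → ℝ))) volume := by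
    rw [← hg_eq]
    exact (volume_measurePreserving_piCongrLeft (fun _ : Fin n => ℝ) σ).comp
      (volume_measurePreserving_sumPiEquivProdPi_symm (fun _ : Fin m ⊕ Fin k => ℝ))
  set P₀ : Set (Fin m → ℝ) := incl m n ⁻¹' P with hP₀def
  set πQ : Set (Fin k → ℝ) := projLast m n hm '' Q with hπQdef
  -- basic facts about g
  have hincl : ∀ y : Fin m → ℝ, incl m n y = g (y, 0) := by
    intro y; funext j
    by_cases hj : (j : ℕ) < m <;> simp [incl, hgdef, hj]
  set h1 : (Fin n → ℝ) → (Fin m → ℝ) := fun x i => x (Fin.castLE hm i) with hh1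
  have hgP : ∀ x ∈ P, g (h1 x, 0) = x := by
    intro x hx; funext j
    by_cases hj : (j : ℕ) < m
    · have : Fin.castLE hm ⟨(j : ℕ), hj⟩ = j := by apply Fin.ext; simp
      simp [hgdef, hj, hh1, this]
    · simp only [hgdef, hj, dif_neg, not_false_iff, Pi.zero_apply]
      exact (hP x hx j (le_of_not_gt hj)).symm
  have hgq : ∀ q : Fin n → ℝ, g (h1 q, projLast m n hm q) = q := by
    intro q; funext j
    by_cases hj : (j : ℕ) < m
    · have : Fin.castLE hm ⟨(j : ℕ), hj⟩ = j := by apply Fin.ext; simp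
      simp [hgdef, hj, hh1, this]
    · have hjm : m + ((j : ℕ) - m) = (j : ℕ) := by omega
      simp only [hgdef, hj, dif_neg, not_false_iff, projLast]
      congr 1
      apply Fin.ext
      simpa using hjm
  have hcont1 : Continuous h1 := continuous_pi fun i => continuous_apply _
  have hP₀img : P₀ = h1 '' P := by
    ext a
    constructor
    · intro ha
      have haP : incl m n a ∈ P := ha
      refine ⟨incl m n a, haP, ?_⟩
      funext i
      have : (Fin.castLE hm i : ℕ) < m := i.isLt
      simp [hh1, incl, this]
    · rintro ⟨x, hx, rfl⟩
      have : incl m n (h1 x) = x := by rw [hincl]; exact hgP x hx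
      simp only [hP₀def, mem_preimage, this]
      exact hx
  have hP₀c : IsCompact P₀ := hP₀img ▸ hPc.image hcont1
  have hπQc : IsCompact πQ := hQc.image (continuous_pi fun i => continuous_apply _)
  have hπQm : MeasurableSet πQ := hπQc.isClosed.measurableSet
  have hπQfin : volume πQ ≠ ⊤ := hπQc.measure_lt_top.ne
  have hP₀fin : volume P₀ ≠ ⊤ := hP₀c.measure_lt_top.ne
  -- linearity-type identity for g
  have hglin : ∀ (c : ℝ) (a w : Fin m → ℝ) (z : Fin k → ℝ),
      g (c • a + w, z) = c • g (a, 0) + g (w, z) := by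
    intro c a w z; funext j
    by_cases hj : (j : ℕ) < m <;> simp [hgdef, hj]
  -- slices
  set Qz : (Fin k → ℝ) → Set (Fin m → ℝ) := fun z => {y | g (y, z) ∈ Q} with hQzdef
  have hslice : ∀ (lam : ℝ) (z : Fin k → ℝ),
      ((fun y => (y, z)) ⁻¹' (g ⁻¹' (lam • P + Q))) = lam • P₀ + Qz z := by
    intro lam z; ext y
    simp only [mem_preimage, Set.mem_add]
    constructor
    · rintro ⟨a, ha, b, hb, hab⟩
      obtain ⟨a', ha', rfl⟩ := mem_smul_set.mp ha
      have ha₀ : h1 a' ∈ P₀ := by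
        simp only [hP₀def, mem_preimage, hincl, hgP a' ha']
        exact ha'
      refine ⟨lam • h1 a', smul_mem_smul_set ha₀, y - lam • h1 a', ?_, by abel⟩
      have hy : lam • h1 a' + (y - lam • h1 a') = y := by abel
      have := hglin lam (h1 a') (y - lam • h1 a') z
      rw [hy, hgP a' ha'] at this
      have hb' : g (y - lam • h1 a', z) = b := by
        have : g (y, z) = lam • a' + g (y - lam • h1 a', z) := this
        rw [← hab] at this
        exact (add_left_cancel this).symm
      simpa only [hQzdef, mem_setOf_eq, hb'] using hb
    · rintro ⟨u, hu, v, hv, huv⟩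
      obtain ⟨a₀, ha₀, rfl⟩ := mem_smul_set.mp hu
      have haP : g (a₀, 0) ∈ P := by
        have := ha₀
        rwa [hP₀def, mem_preimage, hincl] at this
      refine ⟨lam • g (a₀, 0), smul_mem_smul_set haP, g (v, z), hv, ?_⟩
      rw [← hglin lam a₀ v z, huv]
  -- compactness of λ•P + Q
  have hT : ∀ lam : ℝ, IsCompact (lam • P + Q) := fun lam => (hPc.smul lam).add hQc
  -- Fubini-type volume formula
  have hvol : ∀ lam : ℝ, volume (lam • P + Q) = ∫⁻ z, volume (lam • P₀ + Qz z) := by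
    intro lam
    have hmeasT : MeasurableSet (g ⁻¹' (lam • P + Q)) :=
      hg.measurable (hT lam).isClosed.measurableSet
    calc volume (lam • P + Q)
        = volume (g ⁻¹' (lam • P + Q)) :=
          (hg.measure_preimage (hT lam).isClosed.measurableSet.nullMeasurableSet).symm
      _ = ∫⁻ z, volume ((fun y => (y, z)) ⁻¹' (g ⁻¹' (lam • P + Q))) := by
          rw [MeasureTheory.Measure.volume_eq_prod, Measure.prod_apply_symm hmeasT]
      _ = ∫⁻ z, volume (lam • P₀ + Qz z) := by simp_rw [hslice lam]
  -- finrank fact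
  have hfr : Module.finrank ℝ (Fin m → ℝ) = m := Module.finrank_fin_fun ℝ
  -- lower bound
  have hlow : ∀ lam : ℝ, 0 ≤ lam →
      ENNReal.ofReal (lam ^ m) * volume P₀ * volume πQ ≤ volume (lam • P + Q) := by
    intro lam hlam
    rw [hvol lam]
    have key : ∀ z, πQ.indicator (fun _ => ENNReal.ofReal (lam ^ m) * volume P₀) z ≤
        volume (lam • P₀ + Qz z) := by
      intro z
      by_cases hz : z ∈ πQ
      · rw [indicator_of_mem hz]
        obtain ⟨q, hq, rfl⟩ := hz
        have hy₀ : h1 q ∈ Qz (projLast m n hm q) := by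
          simp only [hQzdef, mem_setOf_eq, hgq q]
          exact hq
        have hsub : lam • P₀ + {h1 q} ⊆ lam • P₀ + Qz (projLast m n hm q) :=
          add_subset_add_left (singleton_subset_iff.mpr hy₀)
        have htrans : volume (lam • P₀ + ({h1 q} : Set (Fin m → ℝ))) = volume (lam • P₀) := by
          rw [Set.add_singleton, Set.image_add_right, measure_preimage_add_right]
        calc ENNReal.ofReal (lam ^ m) * volume P₀
            = volume (lam • P₀) := by
              rw [Measure.addHaar_smul_of_nonneg volume hlam P₀, hfr]
          _ = volume (lam • P₀ + ({h1 q} : Set (Fin m → ℝ))) := htrans.symm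
          _ ≤ volume (lam • P₀ + Qz (projLast m n hm q)) := measure_mono hsub
      · rw [indicator_of_notMem hz]
        exact zero_le
    calc ENNReal.ofReal (lam ^ m) * volume P₀ * volume πQ
        = ∫⁻ z, πQ.indicator (fun _ => ENNReal.ofReal (lam ^ m) * volume P₀) z := by
          rw [lintegral_indicator_const hπQm]
      _ ≤ ∫⁻ z, volume (lam • P₀ + Qz z) := lintegral_mono key
  -- bound Q inside a ball
  obtain ⟨R, hRpos, hQR⟩ := hQc.isBounded.subset_closedBall_lt 0 0
  have hQzsub : ∀ z, Qz z ⊆ closedBall 0 R := by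
    intro z y hy
    have hq : g (y, z) ∈ Q := hy
    have hnq : ‖g (y, z)‖ ≤ R := by
      have := hQR hq
      rwa [mem_closedBall_zero_iff] at this
    rw [mem_closedBall_zero_iff, pi_norm_le_iff_of_nonneg hRpos.le]
    intro i
    have hival : ((Fin.castLE hm i : Fin n) : ℕ) < m := i.isLt
    have hyi : y i = g (y, z) (Fin.castLE hm i) := by
      simp [hgdef, hival]
    rw [hyi]
    exact (norm_le_pi_norm (g (y, z)) _).trans hnq
  have hQzempty : ∀ z, z ∉ πQ → Qz z = ∅ := by
    intro z hz
    ext y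
    simp only [mem_empty_iff_false, iff_false]
    intro hy
    apply hz
    refine ⟨g (y, z), hy, ?_⟩
    funext i
    have hval : ¬ ((⟨m + (i : ℕ), by have := i.isLt; omega⟩ : Fin n) : ℕ) < m := by simp
    simp only [projLast, hgdef, hval, dif_neg, not_false_iff]
    congr 1
    apply Fin.ext
    simp
  -- upper bound
  have hup : ∀ lam : ℝ,
      volume (lam • P + Q) ≤ volume (lam • P₀ + closedBall 0 R) * volume πQ := by
    intro lam
    rw [hvol lam]
    calc (∫⁻ z, volume (lam • P₀ + Qz z))
        ≤ ∫⁻ z, πQ.indicator (fun _ => volume (lam • P₀ + closedBall 0 R)) z := by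
          refine lintegral_mono fun z => ?_
          by_cases hz : z ∈ πQ
          · rw [indicator_of_mem hz]
            exact measure_mono (add_subset_add_left (hQzsub z))
          · rw [indicator_of_notMem hz, hQzempty z hz]
            simp
      _ = volume (lam • P₀ + closedBall 0 R) * volume πQ := lintegral_indicator_const hπQm _
  -- rescaling
  have hscale : ∀ lam : ℝ, 0 < lam → volume (lam • P₀ + closedBall 0 R)
      = ENNReal.ofReal (lam ^ m) * volume (P₀ + closedBall 0 (R / lam)) := by
    intro lam hlam
    have hball : lam • closedBall (0 : Fin m → ℝ) (R / lam) = closedBall 0 R := by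
      rw [smul_closedBall _ _ (by positivity : (0 : ℝ) ≤ R / lam)]
      rw [smul_zero, Real.norm_eq_abs, abs_of_pos hlam]
      congr 1
      field_simp
    have hsum : lam • (P₀ + closedBall 0 (R / lam)) = lam • P₀ + closedBall 0 R := by
      rw [smul_add, hball]
    rw [← hsum, Measure.addHaar_smul_of_nonneg volume hlam.le, hfr]
  -- limit of the thickened volume
  have hlimit : Tendsto (fun lam : ℝ => volume (P₀ + closedBall 0 (R / lam))) atTop
      (𝓝 (volume P₀)) := by
    have h1 : Tendsto (fun lam : ℝ => R / lam) atTop (𝓝 0) :=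
      tendsto_const_nhds.div_atTop tendsto_id
    have h2 := (tendsto_measure_cthickening_of_isCompact (μ := volume) hP₀c).comp h1
    refine h2.congr' ?_
    filter_upwards [eventually_gt_atTop (0 : ℝ)] with lam hlam
    have : P₀ + closedBall 0 (R / lam) = cthickening (R / lam) P₀ :=
      hP₀c.add_closedBall_zero (by positivity)
    simp only [Function.comp_apply, this]
  have hPB : ∀ δ : ℝ, IsCompact (P₀ + closedBall 0 δ) :=
    fun δ => hP₀c.add (isCompact_closedBall 0 δ)
  -- put it together
  set cval := (volume P₀).toReal * (volume πQ).toReal with hcval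
  have hU : Tendsto (fun lam : ℝ =>
      (volume (P₀ + closedBall 0 (R / lam))).toReal * (volume πQ).toReal) atTop (𝓝 cval) := by
    exact ((ENNReal.tendsto_toReal hP₀fin).comp hlimit).mul_const _
  have hlower : ∀ᶠ lam : ℝ in atTop, cval ≤ p.eval lam / lam ^ m := by
    filter_upwards [eventually_gt_atTop (0 : ℝ)] with lam hlam
    rw [hp lam hlam.le, le_div_iff₀ (by positivity)]
    have h := hlow lam hlam.le
    have h' := ENNReal.toReal_mono (hT lam).measure_lt_top.ne h
    rw [ENNReal.toReal_mul, ENNReal.toReal_mul,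
      ENNReal.toReal_ofReal (by positivity)] at h'
    calc cval * lam ^ m = lam ^ m * (volume P₀).toReal * (volume πQ).toReal := by
          rw [hcval]; ring
      _ ≤ (volume (lam • P + Q)).toReal := h'
  have hupper : ∀ᶠ lam : ℝ in atTop, p.eval lam / lam ^ m ≤
      (volume (P₀ + closedBall 0 (R / lam))).toReal * (volume πQ).toReal := by
    filter_upwards [eventually_gt_atTop (0 : ℝ)] with lam hlam
    rw [hp lam hlam.le, div_le_iff₀ (by positivity)]
    have h := hup lam
    rw [hscale lam hlam] at h
    have hfin : ENNReal.ofReal (lam ^ m) * volume (P₀ + closedBall 0 (R / lam)) * volume πQ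
        ≠ ⊤ :=
      ENNReal.mul_ne_top (ENNReal.mul_ne_top ENNReal.ofReal_ne_top
        (hPB (R / lam)).measure_lt_top.ne) hπQfin
    have h' := ENNReal.toReal_mono hfin h
    rw [ENNReal.toReal_mul, ENNReal.toReal_mul,
      ENNReal.toReal_ofReal (by positivity)] at h'
    exact h'.trans_eq (by ring)
  have key : Tendsto (fun lam : ℝ => p.eval lam / lam ^ m) atTop (𝓝 cval) :=
    tendsto_of_tendsto_of_tendsto_of_le_of_le' tendsto_const_nhds hU hlower hupper
  rw [coeff_eq_of_tendsto p m cval key]
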